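/- arXiv:1109.5321 — 6 statements merged into one kernel-verified Lean document; each statement's English description precedes it below -/
import Mathlib

section
/- Let p be a prime and e ≥ 2 an integer. Set a = p^e − p^{e−1}, b = p^{e−1} − p^{e−2}, c = p^{e−2} − 1, so that a + b + c = p^e − 1. Then the multinomial coefficient (p^e − 1)! / (a! · b! · c!) is not divisible by p. -/
open Nat Finset

lemma not_dvd_choose_pow_sub_one {p m k : ℕ} (hp : p.Prime) (hk : k ≤ p ^ m - 1) :
    ¬ p ∣ Nat.choose (p ^ m - 1) k := by
  rcases Nat.eq_zero_or_pos m with rfl | hm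
  · have : k = 0 := by simpa using hk
    subst this
    simp [Nat.dvd_one, hp.ne_one]
  rw [← emultiplicity_eq_zero]
  have hpm : 1 < p ^ m := Nat.one_lt_pow (by omega) hp.one_lt
  have hlog : Nat.log p (p ^ m - 1) < m := by
    apply Nat.log_lt_of_lt_pow <;> omega
  rw [Nat.Prime.emultiplicity_choose hp hk hlog]
  rw [Nat.cast_eq_zero]
  rw [Finset.card_eq_zero, Finset.filter_eq_empty_iff]
  intro i hi
  simp only [Finset.mem_Ico] at hi
  push_neg
  set n := p ^ m - 1 with hn
  have hpi : 0 < p ^ i := Nat.pow_pos hp.pos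
  have hdvd : p ^ i ∣ p ^ m := pow_dvd_pow _ (le_of_lt hi.2)
  -- n % p^i = p^i - 1
  have hmod : n % p ^ i = p ^ i - 1 := by
    obtain ⟨c, hc⟩ := hdvd
    obtain ⟨c', rfl⟩ : ∃ c', c = c' + 1 := by
      refine ⟨c - 1, ?_⟩
      rcases Nat.eq_zero_or_pos c with rfl | h
      · rw [Nat.mul_zero] at hc; omega
      · omega
    have : n = p ^ i * c' + (p ^ i - 1) := by
      rw [hn, hc, Nat.mul_add]; omega
    rw [this, Nat.mul_add_mod]
    exact Nat.mod_eq_of_lt (by omega)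
  have ha : k % p ^ i < p ^ i := Nat.mod_lt _ hpi
  have hb : (n - k) % p ^ i < p ^ i := Nat.mod_lt _ hpi
  -- sum ≡ n mod p^i
  have hcong : (k % p ^ i + (n - k) % p ^ i) % p ^ i = p ^ i - 1 := by
    rw [Nat.add_mod, Nat.mod_mod_of_dvd, Nat.mod_mod_of_dvd, ← Nat.add_mod,
      Nat.add_sub_cancel' hk] <;> simp [hmod]
  by_contra h
  push_neg at h
  have h2 : k % p ^ i + (n - k) % p ^ i < 2 * p ^ i := by omega
  have := (Nat.mod_eq_sub_mod h).symm.trans hcong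
  have hlt : k % p ^ i + (n - k) % p ^ i - p ^ i < p ^ i := by omega
  rw [Nat.mod_eq_of_lt hlt] at this
  omega

theorem multinomial_not_div (p e : ℕ) (hp : p.Prime) (he : 2 ≤ e) :
    ¬ p ∣ (Nat.factorial (p ^ e - 1)) /
        (Nat.factorial (p ^ e - p ^ (e - 1)) * Nat.factorial (p ^ (e - 1) - p ^ (e - 2)) *
          Nat.factorial (p ^ (e - 2) - 1)) := by
  set a := p ^ e - p ^ (e - 1) with ha
  set b := p ^ (e - 1) - p ^ (e - 2) with hb
  set c := p ^ (e - 2) - 1 with hc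
  have hp1 : 1 ≤ p := hp.pos
  have h1 : p ^ (e - 2) ≤ p ^ (e - 1) := Nat.pow_le_pow_right hp.pos (by omega)
  have h2 : p ^ (e - 1) ≤ p ^ e := Nat.pow_le_pow_right hp.pos (by omega)
  have h3 : 1 ≤ p ^ (e - 2) := Nat.one_le_pow _ _ hp.pos
  have hbc : b + c = p ^ (e - 1) - 1 := by omega
  have habc : a + (b + c) = p ^ e - 1 := by omega
  have key1 : (p ^ e - 1).factorial =
      Nat.choose (p ^ e - 1) a * a.factorial * (b + c).factorial := by
    have := Nat.choose_mul_factorial_mul_factorial (n := p ^ e - 1) (k := a) (by omega)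
    rw [← this]
    congr 2
    omega
  have key2 : (b + c).factorial = Nat.choose (b + c) b * b.factorial * c.factorial := by
    have := Nat.choose_mul_factorial_mul_factorial (n := b + c) (k := b) (Nat.le_add_right _ _)
    rw [← this]
    congr 2
    omega
  have heq : (p ^ e - 1).factorial / (a.factorial * b.factorial * c.factorial) =
      Nat.choose (p ^ e - 1) a * Nat.choose (b + c) b := by
    rw [key1, key2]
    have hpos : 0 < a.factorial * b.factorial * c.factorial :=
      Nat.mul_pos (Nat.mul_pos a.factorial_pos b.factorial_pos) c.factorial_pos
    rw [show Nat.choose (p ^ e - 1) a * a.factorial *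
        (Nat.choose (b + c) b * b.factorial * c.factorial) =
        (Nat.choose (p ^ e - 1) a * Nat.choose (b + c) b) *
          (a.factorial * b.factorial * c.factorial) by ring]
    exact Nat.mul_div_cancel _ hpos
  rw [heq]
  rw [hp.dvd_mul]
  push_neg
  constructor
  · exact not_dvd_choose_pow_sub_one hp (by omega)
  · rw [hbc]
    exact not_dvd_choose_pow_sub_one (m := e - 1) hp (by omega)
end

section
/- Let d ≥ 1 and e > 0 be a real number. Then for all sufficiently large m, there is no upper triangular (m+1)×(m+1) matrix A = (a_{ij})_{0≤i,j≤m} with nonnegative real entries satisfying: (1) every column sum ∑_{i} a_{ij} = d; (2) every weighted column sum ∑_{i} i·a_{ij} = j for all 0 ≤ j ≤ m; and (3) every row sum ∑_{j} a_{ij} ≤ d² − e. -/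
set_option maxHeartbeats 1000000 in
theorem no_triangular_matrix (d : ℕ) (hd : 1 ≤ d) (e : ℝ) (he : 0 < e) :
    ∃ M : ℕ, ∀ m : ℕ, M ≤ m →
      ¬ ∃ A : ℕ → ℕ → ℝ,
        (∀ i j, i ≤ m → j ≤ m → 0 ≤ A i j) ∧
        (∀ i j, j < i → A i j = 0) ∧
        (∀ j, j ≤ m → ∑ i ∈ Finset.range (m + 1), A i j = d) ∧
        (∀ j, j ≤ m → ∑ i ∈ Finset.range (m + 1), (i : ℝ) * A i j = j) ∧
        (∀ i, i ≤ m → ∑ j ∈ Finset.range (m + 1), A i j ≤ (d : ℝ) ^ 2 - e) := by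
  set D : ℝ := (d : ℝ) with hDdef
  have hD1 : (1 : ℝ) ≤ D := by rw [hDdef]; exact_mod_cast hd
  have hDpos : (0 : ℝ) < D := lt_of_lt_of_le one_pos hD1
  have hDne : D ≠ 0 := ne_of_gt hDpos
  set c : ℝ := e / (2 * D ^ 2) with hcdef
  have hc : 0 < c := div_pos he (by positivity)
  have hce : c * (2 * D ^ 2) = e := div_mul_cancel₀ e (by positivity)
  set r : ℝ := Real.exp (-(c / D)) with hrdef
  set q : ℝ := Real.exp (-c) with hqdef
  have hr0 : 0 < r := Real.exp_pos _
  have hr1 : r < 1 := by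
    apply Real.exp_lt_one_iff.mpr
    have : 0 < c / D := div_pos hc hDpos
    linarith
  have hq0 : 0 < q := Real.exp_pos _
  have hq1 : q < 1 := Real.exp_lt_one_iff.mpr (by linarith)
  obtain ⟨M, hM⟩ : ∃ M : ℕ, r ^ M < c := exists_pow_lt_of_lt_one hc hr1
  refine ⟨M, fun m hm hex => ?_⟩
  obtain ⟨A, hpos, _htri, hcol, hwcol, hrow⟩ := hex
  -- per-column lower bound
  have hcolkey : ∀ j ∈ Finset.range (m + 1),
      D * r ^ j ≤ ∑ i ∈ Finset.range (m + 1), Real.exp (-(c * i)) * A i j := by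
    intro j hj
    have hjm : j ≤ m := Nat.lt_succ_iff.mp (Finset.mem_range.mp hj)
    have hrj : D * r ^ j = Real.exp (-(c * j / D)) * D := by
      rw [hrdef, ← Real.exp_nat_mul]
      ring_nf
    have hpt : ∀ i ∈ Finset.range (m + 1),
        Real.exp (-(c * j / D)) * ((1 + c * j / D - c * i) * A i j)
          ≤ Real.exp (-(c * i)) * A i j := by
      intro i hi
      have hA : 0 ≤ A i j := hpos i j (Nat.lt_succ_iff.mp (Finset.mem_range.mp hi)) hjm
      have hexp : Real.exp (-(c * j / D)) * (1 + c * j / D - c * i)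
          ≤ Real.exp (-(c * i)) := by
        have h1 := Real.add_one_le_exp (c * j / D - c * i)
        calc Real.exp (-(c * j / D)) * (1 + c * j / D - c * i)
            ≤ Real.exp (-(c * j / D)) * Real.exp (c * j / D - c * i) :=
              mul_le_mul_of_nonneg_left (by linarith) (Real.exp_nonneg _)
          _ = Real.exp (-(c * i)) := by rw [← Real.exp_add]; ring_nf
      calc Real.exp (-(c * j / D)) * ((1 + c * j / D - c * i) * A i j)
          = (Real.exp (-(c * j / D)) * (1 + c * j / D - c * i)) * A i j := by ring
        _ ≤ Real.exp (-(c * i)) * A i j := mul_le_mul_of_nonneg_right hexp hA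
    have hsum := Finset.sum_le_sum hpt
    have hsplit : ∑ i ∈ Finset.range (m + 1),
        Real.exp (-(c * j / D)) * ((1 + c * j / D - c * i) * A i j)
        = Real.exp (-(c * j / D)) *
          ((∑ i ∈ Finset.range (m + 1), A i j)
            + (c * j / D) * (∑ i ∈ Finset.range (m + 1), A i j)
            - c * (∑ i ∈ Finset.range (m + 1), (i : ℝ) * A i j)) := by
      rw [Finset.mul_sum, Finset.mul_sum, ← Finset.sum_add_distrib, ← Finset.sum_sub_distrib,
        ← Finset.mul_sum]
      congr 1
      apply Finset.sum_congr rfl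
      intro i _
      ring
    have hval : (∑ i ∈ Finset.range (m + 1), A i j)
            + (c * j / D) * (∑ i ∈ Finset.range (m + 1), A i j)
            - c * (∑ i ∈ Finset.range (m + 1), (i : ℝ) * A i j) = D := by
      rw [hcol j hjm, hwcol j hjm]
      field_simp
      ring
    rw [hsplit, hval] at hsum
    calc D * r ^ j = Real.exp (-(c * j / D)) * D := hrj
      _ ≤ ∑ i ∈ Finset.range (m + 1), Real.exp (-(c * i)) * A i j := hsum
  -- global chain
  have hmain : D * (∑ j ∈ Finset.range (m + 1), r ^ j)
      ≤ (D ^ 2 - e) * (∑ i ∈ Finset.range (m + 1), q ^ i) := by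
    calc D * (∑ j ∈ Finset.range (m + 1), r ^ j)
        = ∑ j ∈ Finset.range (m + 1), D * r ^ j := Finset.mul_sum _ _ _
      _ ≤ ∑ j ∈ Finset.range (m + 1), ∑ i ∈ Finset.range (m + 1),
            Real.exp (-(c * i)) * A i j := Finset.sum_le_sum hcolkey
      _ = ∑ i ∈ Finset.range (m + 1), Real.exp (-(c * i)) *
            (∑ j ∈ Finset.range (m + 1), A i j) := by
          rw [Finset.sum_comm]
          exact Finset.sum_congr rfl fun i _ => (Finset.mul_sum _ _ _).symm
      _ ≤ ∑ i ∈ Finset.range (m + 1), Real.exp (-(c * i)) * (D ^ 2 - e) := by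
          apply Finset.sum_le_sum
          intro i hi
          exact mul_le_mul_of_nonneg_left
            (hrow i (Nat.lt_succ_iff.mp (Finset.mem_range.mp hi))) (Real.exp_nonneg _)
      _ = (D ^ 2 - e) * (∑ i ∈ Finset.range (m + 1), q ^ i) := by
          rw [Finset.mul_sum]
          apply Finset.sum_congr rfl
          intro i _
          rw [hqdef, ← Real.exp_nat_mul]
          ring_nf
  set S : ℝ := ∑ j ∈ Finset.range (m + 1), r ^ j with hSdef
  set T : ℝ := ∑ i ∈ Finset.range (m + 1), q ^ i with hTdef
  have hSgeom : S * (1 - r) = 1 - r ^ (m + 1) := by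
    rw [hSdef]
    linear_combination -(geom_sum_mul r (m + 1))
  have hTgeom : T * (1 - q) = 1 - q ^ (m + 1) := by
    rw [hTdef]
    linear_combination -(geom_sum_mul q (m + 1))
  have hSpos : 0 < S :=
    Finset.sum_pos (fun j _ => pow_pos hr0 j) ⟨0, Finset.mem_range.mpr (Nat.succ_pos m)⟩
  have hTpos : 0 < T :=
    Finset.sum_pos (fun j _ => pow_pos hq0 j) ⟨0, Finset.mem_range.mpr (Nat.succ_pos m)⟩
  have h1r : 0 < 1 - r := by linarith
  have h1q : 0 < 1 - q := by linarith
  have hrm : r ^ (m + 1) < c :=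
    lt_of_le_of_lt (pow_le_pow_of_le_one hr0.le hr1.le (hm.trans (Nat.le_succ m))) hM
  have hqm : 0 < q ^ (m + 1) := pow_pos hq0 _
  -- D * (1 - r) ≤ c
  have hrc : D * (1 - r) ≤ c := by
    have h1 := Real.add_one_le_exp (-(c / D))
    have h2 : D * (c / D) = c := by field_simp
    nlinarith [mul_le_mul_of_nonneg_left h1 hDpos.le, h2]
  -- c ≤ (1 + c) * (1 - q)
  have hqc : c ≤ (1 + c) * (1 - q) := by
    have h1 := Real.add_one_le_exp c
    have h2 : q * Real.exp c = 1 := by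
      rw [hqdef, ← Real.exp_add]; simp
    nlinarith [mul_le_mul_of_nonneg_left h1 hq0.le, h2]
  rcases le_or_gt (D ^ 2 - e) 0 with hcase | hcase
  · nlinarith [mul_pos hDpos hSpos, mul_nonpos_of_nonpos_of_nonneg hcase hTpos.le]
  · -- e < D^2, so c < 1/2
    have hchalf : c < 1 / 2 := by
      rw [hcdef, div_lt_iff₀ (by positivity)]
      nlinarith
    have hScl : 1 - c < S * (1 - r) := by rw [hSgeom]; linarith
    have hTcl : T * (1 - q) < 1 := by rw [hTgeom]; linarith
    have u1 : D * (1 - r) * (1 + c) * ((D ^ 2 - e) * (T * (1 - q)))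
        ≤ D * (1 - r) * (1 + c) * (D ^ 2 - e) := by
      nlinarith [mul_le_mul_of_nonneg_left hTcl.le
        (by positivity : (0:ℝ) ≤ D * (1 - r) * (1 + c) * (D ^ 2 - e))]
    have u2 : D * (1 - r) * (1 + c) * (D ^ 2 - e) ≤ c * (1 + c) * (D ^ 2 - e) := by
      nlinarith [mul_le_mul_of_nonneg_right hrc
        (by positivity : (0:ℝ) ≤ (1 + c) * (D ^ 2 - e))]
    have u3 : c * (1 + c) * (D ^ 2 - e) < c * (D ^ 2 * (1 - c)) := by
      have hkey : (D ^ 2 - e) * (1 + c) < D ^ 2 * (1 - c) := by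
        nlinarith [mul_pos he hc, hce]
      nlinarith [mul_lt_mul_of_pos_left hkey hc]
    have u4 : c * (D ^ 2 * (1 - c)) ≤ (1 + c) * (1 - q) * (D ^ 2 * (1 - c)) := by
      have hnn : (0:ℝ) ≤ D ^ 2 * (1 - c) := by nlinarith
      nlinarith [mul_le_mul_of_nonneg_right hqc hnn]
    have l1 : D * (1 - r) * (1 + c) * (1 - q) * (D * S)
        ≤ D * (1 - r) * (1 + c) * (1 - q) * ((D ^ 2 - e) * T) :=
      mul_le_mul_of_nonneg_left hmain (by positivity)
    have l2 : (1 + c) * (1 - q) * (D ^ 2 * (1 - c))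
        < (1 + c) * (1 - q) * (D ^ 2 * (S * (1 - r))) := by
      apply mul_lt_mul_of_pos_left _ (by positivity)
      exact mul_lt_mul_of_pos_left hScl (by positivity)
    linarith [u1, u2, u3, u4, l1, l2]
end

section
/- Let k be a commutative ring, f ∈ k[x_1,…,x_N] a polynomial, and for m ≥ 0 define polynomials F^{(0)},…,F^{(m)} ∈ k[x_i^{(j)} : 1 ≤ i ≤ N, 0 ≤ j ≤ m] by the identity f(∑_j x_1^{(j)} t^j, …, ∑_j x_N^{(j)} t^j) ≡ ∑_{j=0}^{m} F^{(j)} t^j (mod t^{m+1}) in k[x_i^{(j)}][t]/(t^{m+1}). If f is homogeneous of degree d, then each F^{(j)} is homogeneous of degree d, and F^{(j)} is quasi-homogeneous of weight j when the variable x_i^{(j')} is assigned weight j'. -/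
open MvPolynomial Polynomial

private def JetGood {k : Type*} [CommRing k] {N : ℕ} (e : ℕ)
    (P : Polynomial (MvPolynomial (Fin N × ℕ) k)) : Prop :=
  ∀ j, (P.coeff j).IsHomogeneous e ∧
    (P.coeff j).IsWeightedHomogeneous (fun v : Fin N × ℕ => v.2) j

private theorem jetGood_zero {k : Type*} [CommRing k] {N : ℕ} (e : ℕ) :
    JetGood (k := k) (N := N) e 0 := fun j => by
  simp only [Polynomial.coeff_zero]
  exact ⟨MvPolynomial.isHomogeneous_zero _ _ _,
    MvPolynomial.isWeightedHomogeneous_zero _ _ _⟩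

private theorem jetGood_add {k : Type*} [CommRing k] {N : ℕ} {e : ℕ}
    {P Q : Polynomial (MvPolynomial (Fin N × ℕ) k)}
    (hP : JetGood e P) (hQ : JetGood e Q) : JetGood e (P + Q) := fun j => by
  simp only [Polynomial.coeff_add]
  exact ⟨(hP j).1.add (hQ j).1, (hP j).2.add (hQ j).2⟩

private theorem jetGood_sum {k : Type*} [CommRing k] {N : ℕ} {e : ℕ}
    {ι : Type*} (s : Finset ι) (P : ι → Polynomial (MvPolynomial (Fin N × ℕ) k))
    (h : ∀ i ∈ s, JetGood e (P i)) : JetGood e (∑ i ∈ s, P i) := by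
  classical
  induction s using Finset.induction_on with
  | empty => simpa using jetGood_zero e
  | insert _ _ hi ih =>
    rw [Finset.sum_insert hi]
    exact jetGood_add (h _ (Finset.mem_insert_self _ _))
      (ih fun i hi' => h i (Finset.mem_insert_of_mem hi'))

private theorem jetGood_mul {k : Type*} [CommRing k] {N : ℕ} {e e' : ℕ}
    {P Q : Polynomial (MvPolynomial (Fin N × ℕ) k)}
    (hP : JetGood e P) (hQ : JetGood e' Q) : JetGood (e + e') (P * Q) := fun j => by
  rw [Polynomial.coeff_mul]
  constructor
  · exact MvPolynomial.IsHomogeneous.sum _ _ _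
      (fun x _ => ((hP x.1).1.mul (hQ x.2).1))
  · refine MvPolynomial.IsWeightedHomogeneous.sum _ _ _ (fun x hx => ?_)
    have : x.1 + x.2 = j := Finset.HasAntidiagonal.mem_antidiagonal.mp hx
    exact this ▸ ((hP x.1).2.mul (hQ x.2).2)

private theorem jetGood_prod {k : Type*} [CommRing k] {N : ℕ}
    {ι : Type*} (s : Finset ι) (P : ι → Polynomial (MvPolynomial (Fin N × ℕ) k))
    (n : ι → ℕ) (h : ∀ i ∈ s, JetGood (n i) (P i)) :
    JetGood (∑ i ∈ s, n i) (∏ i ∈ s, P i) := by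
  classical
  induction s using Finset.induction_on with
  | empty =>
    intro j
    simp only [Finset.prod_empty, Finset.sum_empty]
    rcases eq_or_ne j 0 with rfl | hj
    · simpa using ⟨MvPolynomial.isHomogeneous_one _ _,
        MvPolynomial.isWeightedHomogeneous_one _ _⟩
    · simp only [Polynomial.coeff_one, if_neg (by simpa using hj)]
      exact ⟨MvPolynomial.isHomogeneous_zero _ _ _,
        MvPolynomial.isWeightedHomogeneous_zero _ _ _⟩
  | insert _ _ hi ih =>
    rw [Finset.prod_insert hi, Finset.sum_insert hi]
    exact jetGood_mul (h _ (Finset.mem_insert_self _ _))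
      (ih fun i hi' => h i (Finset.mem_insert_of_mem hi'))

private theorem jetGood_C {k : Type*} [CommRing k] {N : ℕ} (c : k) :
    JetGood (N := N) 0 (Polynomial.C (MvPolynomial.C c)) := fun j => by
  rcases eq_or_ne j 0 with rfl | hj
  · simp only [Polynomial.coeff_C_zero]
    exact ⟨MvPolynomial.isHomogeneous_C _ _,
      MvPolynomial.isWeightedHomogeneous_C _ _⟩
  · simp only [Polynomial.coeff_C, if_neg hj]
    exact ⟨MvPolynomial.isHomogeneous_zero _ _ _,
      MvPolynomial.isWeightedHomogeneous_zero _ _ _⟩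

private theorem jetGood_gen {k : Type*} [CommRing k] {N m : ℕ} (i : Fin N) :
    JetGood 1 (∑ j' ∈ Finset.range (m + 1),
      Polynomial.C (MvPolynomial.X (i, j') : MvPolynomial (Fin N × ℕ) k) *
        Polynomial.X ^ j') := fun j => by
  have hc : (∑ j' ∈ Finset.range (m + 1),
      Polynomial.C (MvPolynomial.X (i, j') : MvPolynomial (Fin N × ℕ) k) *
        Polynomial.X ^ j').coeff j
      = if j ∈ Finset.range (m + 1) then MvPolynomial.X (i, j) else 0 := by
    rw [Polynomial.finset_sum_coeff]
    rw [← Finset.sum_ite_eq (Finset.range (m + 1)) j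
      (fun j' => (MvPolynomial.X (i, j') : MvPolynomial (Fin N × ℕ) k))]
    refine Finset.sum_congr rfl fun j' _ => ?_
    rw [Polynomial.coeff_C_mul, Polynomial.coeff_X_pow]
    by_cases h : j = j' <;> simp [h, eq_comm]
  rw [hc]
  split_ifs with h
  · exact ⟨MvPolynomial.isHomogeneous_X _ _,
      MvPolynomial.isWeightedHomogeneous_X _ _ _⟩
  · exact ⟨MvPolynomial.isHomogeneous_zero _ _ _,
      MvPolynomial.isWeightedHomogeneous_zero _ _ _⟩

theorem jet_equation_homogeneous {k : Type*} [CommRing k] (N m d : ℕ)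
    (f : MvPolynomial (Fin N) k) (hf : f.IsHomogeneous d) (j : ℕ) (hj : j ≤ m) :
    MvPolynomial.IsHomogeneous
      (Polynomial.coeff
        (MvPolynomial.aeval
          (fun i : Fin N =>
            ∑ j' ∈ Finset.range (m + 1),
              Polynomial.C (MvPolynomial.X (i, j') : MvPolynomial (Fin N × ℕ) k) *
                Polynomial.X ^ j') f) j) d ∧
    MvPolynomial.IsWeightedHomogeneous (fun v : Fin N × ℕ => v.2)
      (Polynomial.coeff
        (MvPolynomial.aeval
          (fun i : Fin N =>
            ∑ j' ∈ Finset.range (m + 1),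
              Polynomial.C (MvPolynomial.X (i, j') : MvPolynomial (Fin N × ℕ) k) *
                Polynomial.X ^ j') f) j) j := by
  set g : Fin N → Polynomial (MvPolynomial (Fin N × ℕ) k) := fun i =>
    ∑ j' ∈ Finset.range (m + 1),
      Polynomial.C (MvPolynomial.X (i, j') : MvPolynomial (Fin N × ℕ) k) *
        Polynomial.X ^ j' with hg
  have key : JetGood d (MvPolynomial.aeval g f) := by
    have hfs : MvPolynomial.aeval g f
        = ∑ σ ∈ f.support, MvPolynomial.aeval g (MvPolynomial.monomial σ (f.coeff σ)) := by
      conv_lhs => rw [f.as_sum]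
      rw [map_sum]
    rw [hfs]
    refine jetGood_sum _ _ fun σ hσ => ?_
    rw [MvPolynomial.aeval_monomial]
    have hdeg : ∑ i ∈ σ.support, σ i = d := by
      have := hf (MvPolynomial.mem_support_iff.mp hσ)
      simpa [Finsupp.weight, Finsupp.linearCombination, Finsupp.sum] using this
    have : (Finsupp.prod σ fun i n => g i ^ n) = ∏ i ∈ σ.support, g i ^ σ i := rfl
    rw [this]
    have h1 : JetGood (∑ i ∈ σ.support, σ i) (∏ i ∈ σ.support, g i ^ σ i) := by
      refine jetGood_prod _ _ _ fun i _ => ?_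
      have := jetGood_prod (Finset.range (σ i)) (fun _ => g i) (fun _ => 1)
        (fun _ _ => jetGood_gen i)
      simpa using this
    have h0 : JetGood 0 (algebraMap k (Polynomial (MvPolynomial (Fin N × ℕ) k))
        (MvPolynomial.coeff σ f)) := by
      have : algebraMap k (Polynomial (MvPolynomial (Fin N × ℕ) k))
          (MvPolynomial.coeff σ f)
          = Polynomial.C (MvPolynomial.C (MvPolynomial.coeff σ f)) := rfl
      rw [this]
      exact jetGood_C _
    have := jetGood_mul h0 h1
    rwa [zero_add, hdeg] at this
  exact key j
end

section
/- Let k be a commutative ring, f ∈ k[x_1,…,x_N] homogeneous of degree d, and define F^{(j)} as the coefficient of t^j in f(∑_j x_1^{(j)} t^j, …, ∑_j x_N^{(j)} t^j). Then for every j ≥ d, substituting x_i^{(0)} = 0 for all i yields F^{(j)}(0, x^{(1)}, …, x^{(j)}) = F^{(j−d)}(x^{(1)}, …, x^{(j−d+1)}), where on the right-hand side F^{(j−d)} is evaluated with x^{(j')} in place of x^{(j'−1)}, i.e., the variables are shifted in weight by one. -/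
lemma aeval_mul_of_isHomogeneous {k A : Type*} [CommRing k] [CommRing A] [Algebra k A]
    {N d : ℕ} {f : MvPolynomial (Fin N) k} (hf : f.IsHomogeneous d) (c : A) (g : Fin N → A) :
    MvPolynomial.aeval (fun i => c * g i) f = c ^ d * MvPolynomial.aeval g f := by
  rw [f.as_sum, map_sum, map_sum, Finset.mul_sum]
  refine Finset.sum_congr rfl fun m hm => ?_
  have hdeg : (m.sum fun _ e => e) = d := by
    have := hf (MvPolynomial.mem_support_iff.1 hm)
    simpa [Finsupp.weight_apply, Finsupp.sum] using this
  rw [MvPolynomial.aeval_monomial, MvPolynomial.aeval_monomial]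
  rw [Finsupp.prod, Finsupp.prod]
  simp_rw [mul_pow]
  rw [Finset.prod_mul_distrib, Finset.prod_pow_eq_pow_sum]
  rw [show ∑ i ∈ m.support, m i = d from hdeg]
  ring

theorem jet_equation_shift {k : Type*} [CommRing k] (N m d : ℕ)
    (f : MvPolynomial (Fin N) k) (hf : f.IsHomogeneous d) (j : ℕ) (hdj : d ≤ j) (hjm : j ≤ m) :
    MvPolynomial.aeval
      (fun v : Fin N × ℕ =>
        if v.2 = 0 then 0 else (MvPolynomial.X v : MvPolynomial (Fin N × ℕ) k))
      (Polynomial.coeff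
        (MvPolynomial.aeval
          (fun i : Fin N =>
            ∑ j' ∈ Finset.range (m + 1),
              Polynomial.C (MvPolynomial.X (i, j') : MvPolynomial (Fin N × ℕ) k) *
                Polynomial.X ^ j') f) j) =
    Polynomial.coeff
      (MvPolynomial.aeval
        (fun i : Fin N =>
          ∑ j' ∈ Finset.Icc 1 m,
            Polynomial.C (MvPolynomial.X (i, j') : MvPolynomial (Fin N × ℕ) k) *
              Polynomial.X ^ (j' - 1)) f) (j - d) := by
  set A := MvPolynomial (Fin N × ℕ) k
  set σ : A →ₐ[k] A := MvPolynomial.aeval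
    (fun v : Fin N × ℕ => if v.2 = 0 then 0 else (MvPolynomial.X v : A))
  set g : Fin N → Polynomial A := fun i =>
    ∑ j' ∈ Finset.Icc 1 m, Polynomial.C (MvPolynomial.X (i, j') : A) * Polynomial.X ^ (j' - 1)
  have hmap : ∀ i : Fin N, Polynomial.mapAlgHom σ
      (∑ j' ∈ Finset.range (m + 1),
        Polynomial.C (MvPolynomial.X (i, j') : A) * Polynomial.X ^ j') =
      Polynomial.X * g i := by
    intro i
    rw [show (Polynomial.mapAlgHom σ : Polynomial A → Polynomial A) =
      Polynomial.map (σ : A →+* A) from Polynomial.coe_mapAlgHom σ]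
    rw [Polynomial.map_sum]
    rw [show Finset.range (m + 1) = insert 0 (Finset.Icc 1 m) by
      ext x; simp [Finset.mem_range, Finset.mem_Icc]; omega]
    rw [Finset.sum_insert (by simp), Finset.mul_sum]
    simp only [Polynomial.map_mul, Polynomial.map_C, Polynomial.map_pow, Polynomial.map_X]
    have h0 : (σ : A →+* A) (MvPolynomial.X (i, 0)) = 0 := by
      show (MvPolynomial.aeval fun v : Fin N × ℕ =>
        if v.2 = 0 then 0 else (MvPolynomial.X v : A)) (MvPolynomial.X (i, 0)) = 0
      rw [MvPolynomial.aeval_X]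
      simp
    rw [h0]
    simp only [Polynomial.C_0, zero_mul, pow_zero, zero_add]
    refine Finset.sum_congr rfl fun j' hj' => ?_
    have h1 : j' ≠ 0 := by rcases Finset.mem_Icc.1 hj' with ⟨h, _⟩; omega
    have h2 : (σ : A →+* A) (MvPolynomial.X (i, j')) = MvPolynomial.X (i, j') := by
      show (MvPolynomial.aeval fun v : Fin N × ℕ =>
        if v.2 = 0 then 0 else (MvPolynomial.X v : A)) (MvPolynomial.X (i, j')) =
        MvPolynomial.X (i, j')
      rw [MvPolynomial.aeval_X]
      simp [h1]
    rw [h2, show Polynomial.X ^ j' = Polynomial.X * Polynomial.X ^ (j' - 1) by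
      conv_lhs => rw [show j' = (j' - 1) + 1 by omega]
      ring]
    ring
  have key : Polynomial.mapAlgHom σ (MvPolynomial.aeval
      (fun i : Fin N => ∑ j' ∈ Finset.range (m + 1),
        Polynomial.C (MvPolynomial.X (i, j') : A) * Polynomial.X ^ j') f) =
      Polynomial.X ^ d * MvPolynomial.aeval g f := by
    rw [MvPolynomial.comp_aeval_apply (R := k)
      (fun i : Fin N => ∑ j' ∈ Finset.range (m + 1),
        Polynomial.C (MvPolynomial.X (i, j') : A) * Polynomial.X ^ j')
      (Polynomial.mapAlgHom σ) f]
    simp_rw [hmap]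
    exact aeval_mul_of_isHomogeneous hf Polynomial.X g
  calc σ (Polynomial.coeff (MvPolynomial.aeval
      (fun i : Fin N => ∑ j' ∈ Finset.range (m + 1),
        Polynomial.C (MvPolynomial.X (i, j') : A) * Polynomial.X ^ j') f) j)
      = (Polynomial.mapAlgHom σ (MvPolynomial.aeval
          (fun i : Fin N => ∑ j' ∈ Finset.range (m + 1),
            Polynomial.C (MvPolynomial.X (i, j') : A) * Polynomial.X ^ j') f)).coeff j := by
        rw [show (Polynomial.mapAlgHom σ : Polynomial A → Polynomial A) =
          Polynomial.map (σ : A →+* A) from Polynomial.coe_mapAlgHom σ, Polynomial.coeff_map]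
        rfl
    _ = (Polynomial.X ^ d * MvPolynomial.aeval g f).coeff j := by rw [key]
    _ = (MvPolynomial.aeval g f).coeff (j - d) := by
        rw [show j = (j - d) + d by omega, Polynomial.coeff_X_pow_mul]
        congr 1
        omega
end

section
/- Let S be a commutative Noetherian ring of prime characteristic p, let f_1, …, f_r be a regular sequence in S, let I = (f_1, …, f_r), f = ∏_{i=1}^r f_i, and q = p^e a power of p. Then the colon ideal (I^{[q]} : I) equals I^{[q]} + f^{q−1}·S, where I^{[q]} = (f_1^q, …, f_r^q). -/
namespace CFP

variable {S : Type*} [CommRing S]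

open Ideal

/-- Relative weak regularity of a list over a base ideal. -/
def WR (K : Ideal S) : List S → Prop
  | [] => True
  | x :: l => (∀ s, s * x ∈ K → s ∈ K) ∧ WR (K ⊔ Ideal.span {x}) l

lemma WR_congr {K K' : Ideal S} {l : List S} (h : K = K') (hw : WR K l) : WR K' l := h ▸ hw

lemma WR_top : ∀ (l : List S) (K : Ideal S), K = ⊤ → WR K l
  | [], _, _ => trivial
  | x :: l, K, h => ⟨fun s _ => h ▸ Submodule.mem_top,
      WR_top l _ (by rw [h, top_sup_eq])⟩

lemma mem_sup_span {K : Ideal S} {a s : S} :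
    s ∈ K ⊔ Ideal.span {a} ↔ ∃ k ∈ K, ∃ t, s = k + t * a := by
  rw [Submodule.mem_sup]
  constructor
  · rintro ⟨k, hk, z, hz, rfl⟩
    rcases Ideal.mem_span_singleton'.mp hz with ⟨t, rfl⟩
    exact ⟨k, hk, t, rfl⟩
  · rintro ⟨k, hk, t, rfl⟩
    exact ⟨k, hk, t * a, Ideal.mem_span_singleton'.mpr ⟨t, rfl⟩, rfl⟩

lemma sup_rswap (A B C : Ideal S) : (A ⊔ B) ⊔ C = (A ⊔ C) ⊔ B := by
  rw [sup_assoc, sup_assoc, sup_comm B C]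

lemma WR_append {l₁ l₂ : List S} : ∀ {K : Ideal S}, WR K (l₁ ++ l₂) →
    WR K l₁ ∧ WR (K ⊔ Ideal.ofList l₁) l₂ := by
  induction l₁ with
  | nil => exact fun h => ⟨trivial, WR_congr (by simp) h⟩
  | cons x l ih =>
    intro K h
    obtain ⟨h1, h2⟩ := h
    obtain ⟨h3, h4⟩ := ih h2
    exact ⟨⟨h1, h3⟩, WR_congr (by rw [ofList_cons, ← sup_assoc]) h4⟩

lemma nzd_pow {K : Ideal S} {x : S} (hx : ∀ s, s * x ∈ K → s ∈ K) :
    ∀ (n : ℕ) (s : S), s * x ^ n ∈ K → s ∈ K := by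
  intro n
  induction n with
  | zero => simpa using fun s h => h
  | succ n ih =>
    intro s hs
    rw [pow_succ', ← mul_assoc] at hs
    exact hx s (ih (s * x) hs)

/-- The key exchange lemma: the first element of a weakly regular sequence is a
nonzerodivisor modulo the ideal generated by the rest. -/
lemma WR_star {K : Ideal S} {x : S} {l : List S} (h : WR K (x :: l)) :
    ∀ s, s * x ∈ K ⊔ Ideal.ofList l → s ∈ K ⊔ Ideal.ofList l := by
  induction l using List.reverseRecOn with
  | nil =>
    intro s hs
    rw [ofList_nil, sup_bot_eq] at hs ⊢
    exact h.1 s hs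
  | append_singleton zs y ih =>
    intro s hs
    rw [← List.cons_append] at h
    obtain ⟨h1, h2⟩ := WR_append (l₁ := x :: zs) (l₂ := [y]) h
    have hKe : K ⊔ Ideal.ofList (x :: zs) = (K ⊔ Ideal.ofList zs) ⊔ Ideal.span {x} := by
      rw [ofList_cons, ← sup_assoc, sup_rswap]
    have hy : ∀ t, t * y ∈ (K ⊔ Ideal.ofList zs) ⊔ Ideal.span {x} →
        t ∈ (K ⊔ Ideal.ofList zs) ⊔ Ideal.span {x} := by
      intro t ht
      have := h2.1 t (by rw [hKe]; exact ht)
      rwa [hKe] at this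
    rw [ofList_append, ofList_singleton, ← sup_assoc] at hs ⊢
    obtain ⟨m, hm, t, hst⟩ := mem_sup_span.mp hs
    have ht : t * y ∈ (K ⊔ Ideal.ofList zs) ⊔ Ideal.span {x} := by
      have : t * y = s * x - m := by rw [hst]; ring
      rw [this]
      exact sub_mem (Submodule.mem_sup_right (Ideal.mem_span_singleton'.mpr ⟨s, rfl⟩))
        (Submodule.mem_sup_left hm)
    obtain ⟨m', hm', u, htu⟩ := mem_sup_span.mp (hy t ht)
    have key : (s - u * y) * x ∈ K ⊔ Ideal.ofList zs := by
      have : (s - u * y) * x = m + m' * y := by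
        rw [sub_mul, hst, htu]; ring
      rw [this]
      exact add_mem hm (Ideal.mul_mem_right y _ hm')
    have := ih h1 _ key
    have hfin : s = (s - u * y) + u * y := by ring
    rw [hfin]
    exact add_mem (Submodule.mem_sup_left this)
      (Submodule.mem_sup_right (Ideal.mem_span_singleton'.mpr ⟨u, rfl⟩))

/-- The chase lemma: weak regularity passes through a short exact sequence. -/
lemma WR_chase : ∀ (l : List S) (IA IB IC : Ideal S) (φ : S),
    (∀ a ∈ IA, a * φ ∈ IB) → (∀ c ∈ IC, ∃ t, c - t * φ ∈ IB) → IB ≤ IC → φ ∈ IC →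
    (∀ s, s * φ ∈ IB → s ∈ IA) → WR IA l → WR IC l → WR IB l := by
  intro l
  induction l with
  | nil => intros; trivial
  | cons y l ih =>
    intro IA IB IC φ hE0 hE1 hBC hφ hE2 hWA hWC
    constructor
    · intro s hs
      obtain ⟨t, hb⟩ := hE1 s (hWC.1 s (hBC hs))
      have h1 : (t * y) * φ ∈ IB := by
        have : (t * y) * φ = s * y - (s - t * φ) * y := by ring
        rw [this]
        exact sub_mem hs (Ideal.mul_mem_right y _ hb)
      have h2 : t ∈ IA := hWA.1 t (hE2 _ h1)
      have : s = t * φ + (s - t * φ) := by ring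
      rw [this]
      exact add_mem (hE0 t h2) hb
    · refine ih (IA ⊔ Ideal.span {y}) (IB ⊔ Ideal.span {y}) (IC ⊔ Ideal.span {y}) φ
        ?_ ?_ (sup_le_sup_right hBC _) (Submodule.mem_sup_left hφ) ?_ hWA.2 hWC.2
      · intro a ha
        obtain ⟨a0, ha0, u, rfl⟩ := mem_sup_span.mp ha
        have : (a0 + u * y) * φ = a0 * φ + (u * φ) * y := by ring
        rw [this]
        exact add_mem (Submodule.mem_sup_left (hE0 a0 ha0))
          (Submodule.mem_sup_right (Ideal.mem_span_singleton'.mpr ⟨u * φ, rfl⟩))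
      · intro c hc
        obtain ⟨c0, hc0, u, rfl⟩ := mem_sup_span.mp hc
        obtain ⟨t, hb⟩ := hE1 c0 hc0
        refine ⟨t, ?_⟩
        have : c0 + u * y - t * φ = (c0 - t * φ) + u * y := by ring
        rw [this]
        exact add_mem (Submodule.mem_sup_left hb)
          (Submodule.mem_sup_right (Ideal.mem_span_singleton'.mpr ⟨u, rfl⟩))
      · intro s hs
        obtain ⟨b, hbB, u, hsu⟩ := mem_sup_span.mp hs
        have huy : u * y ∈ IC := by
          have : u * y = s * φ - b := by rw [hsu]; ring
          rw [this]
          exact sub_mem (Ideal.mul_mem_left _ s hφ) (hBC hbB)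
        obtain ⟨t, hc⟩ := hE1 u (hWC.1 u huy)
        have h3 : (s - t * y) * φ ∈ IB := by
          have : (s - t * y) * φ = b + (u - t * φ) * y := by
            linear_combination hsu
          rw [this]
          exact add_mem hbB (Ideal.mul_mem_right y _ hc)
        have := hE2 _ h3
        have hfin : s = (s - t * y) + t * y := by ring
        rw [hfin]
        exact add_mem (Submodule.mem_sup_left this)
          (Submodule.mem_sup_right (Ideal.mem_span_singleton'.mpr ⟨t, rfl⟩))

/-- Raising an element to a power preserves weak regularity of the rest. -/
lemma WR_pow_head {K : Ideal S} {x : S} {l : List S}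
    (hx : ∀ s, s * x ∈ K → s ∈ K) (hl : WR (K ⊔ Ideal.span {x}) l) :
    ∀ v : ℕ, WR (K ⊔ Ideal.span {x ^ v}) l := by
  intro v
  induction v with
  | zero => exact WR_top _ _ (by simp [Ideal.span_singleton_one])
  | succ v ihv =>
    rcases Nat.eq_zero_or_pos v with rfl | hv
    · exact WR_congr (by rw [pow_one]) hl
    refine WR_chase l (K ⊔ Ideal.span {x}) (K ⊔ Ideal.span {x ^ (v + 1)})
      (K ⊔ Ideal.span {x ^ v}) (x ^ v) ?_ ?_ ?_
      (Submodule.mem_sup_right (Ideal.subset_span rfl)) ?_ hl ihv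
    · intro a ha
      obtain ⟨k, hk, t, rfl⟩ := mem_sup_span.mp ha
      have : (k + t * x) * x ^ v = k * x ^ v + t * x ^ (v + 1) := by
        rw [pow_succ]; ring
      rw [this]
      exact add_mem (Submodule.mem_sup_left (Ideal.mul_mem_right _ _ hk))
        (Submodule.mem_sup_right (Ideal.mem_span_singleton'.mpr ⟨t, rfl⟩))
    · intro c hc
      obtain ⟨k, hk, t, rfl⟩ := mem_sup_span.mp hc
      exact ⟨t, by simpa using Submodule.mem_sup_left hk⟩
    · refine sup_le_sup_left ?_ K
      rw [Ideal.span_singleton_le_span_singleton]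
      exact ⟨x, by rw [pow_succ]⟩
    · intro s hs
      obtain ⟨k, hk, t, hst⟩ := mem_sup_span.mp hs
      have : (s - t * x) * x ^ v ∈ K := by
        have : (s - t * x) * x ^ v = k := by
          rw [sub_mul, hst, pow_succ]; ring
        rw [this]; exact hk
      have := nzd_pow hx v _ this
      have hfin : s = (s - t * x) + t * x := by ring
      rw [hfin]
      exact add_mem (Submodule.mem_sup_left this)
        (Submodule.mem_sup_right (Ideal.mem_span_singleton'.mpr ⟨t, rfl⟩))

/-- Powers of a weakly regular sequence form a weakly regular sequence. -/
lemma WR_pow_all : ∀ (pl : List (S × ℕ)) (K : Ideal S),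
    WR K (pl.map Prod.fst) → WR K (pl.map fun p => p.1 ^ p.2) := by
  intro pl
  induction pl with
  | nil => intro K _; trivial
  | cons p pl ih =>
    intro K h
    obtain ⟨x, a⟩ := p
    refine ⟨nzd_pow h.1 a, ?_⟩
    exact WR_pow_head h.1 (ih _ h.2) a

/-- Single colon step: dividing by `x` drops its exponent by one. -/
lemma core1 (pl : List (S × ℕ)) (K : Ideal S) (x : S) (a : ℕ) (ha : 1 ≤ a)
    (h : WR K (x :: pl.map Prod.fst)) (s : S)
    (hs : s * x ∈ (K ⊔ Ideal.span {x ^ a}) ⊔ Ideal.ofList (pl.map fun p => p.1 ^ p.2)) :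
    s ∈ (K ⊔ Ideal.span {x ^ (a - 1)}) ⊔ Ideal.ofList (pl.map fun p => p.1 ^ p.2) := by
  set P := Ideal.ofList (pl.map fun p => p.1 ^ p.2) with hP
  have hwr : WR K (x :: pl.map fun p => p.1 ^ p.2) := ⟨h.1, WR_pow_all pl _ h.2⟩
  rw [sup_rswap] at hs
  obtain ⟨m, hm, t, hst⟩ := mem_sup_span.mp hs
  have key : (s - t * x ^ (a - 1)) * x ∈ K ⊔ P := by
    have : (s - t * x ^ (a - 1)) * x = m := by
      rw [sub_mul, hst, mul_assoc, ← pow_succ, Nat.sub_add_cancel ha]; ring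
    rw [this]; exact hm
  have := WR_star hwr _ key
  have hfin : s = (s - t * x ^ (a - 1)) + t * x ^ (a - 1) := by ring
  rw [sup_rswap, hfin]
  exact add_mem (Submodule.mem_sup_left this)
    (Submodule.mem_sup_right (Ideal.mem_span_singleton'.mpr ⟨t, rfl⟩))

lemma core_iter (pl : List (S × ℕ)) (K : Ideal S) (x : S)
    (h : WR K (x :: pl.map Prod.fst)) :
    ∀ (b a : ℕ), b < a → ∀ s,
      s * x ^ b ∈ (K ⊔ Ideal.span {x ^ a}) ⊔ Ideal.ofList (pl.map fun p => p.1 ^ p.2) →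
      s ∈ (K ⊔ Ideal.span {x ^ (a - b)}) ⊔ Ideal.ofList (pl.map fun p => p.1 ^ p.2) := by
  intro b
  induction b with
  | zero => intro a _ s hs; simpa using hs
  | succ b ihb =>
    intro a hba s hs
    rw [pow_succ, ← mul_assoc] at hs
    have h2 := core1 pl K x a (by omega) h _ hs
    have h3 := ihb (a - 1) (by omega) s h2
    have : a - 1 - b = a - (b + 1) := by omega
    rwa [this] at h3

/-- Colon by a monomial. -/
lemma core_mono : ∀ (pl : List (S × ℕ × ℕ)) (K : Ideal S),
    WR K (pl.map fun p => p.1) → (∀ p ∈ pl, p.2.2 < p.2.1) → ∀ s,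
    s * (pl.map fun p => p.1 ^ p.2.2).prod ∈
      K ⊔ Ideal.ofList (pl.map fun p => p.1 ^ p.2.1) →
    s ∈ K ⊔ Ideal.ofList (pl.map fun p => p.1 ^ (p.2.1 - p.2.2)) := by
  intro pl
  induction pl with
  | nil => intro K _ _ s hs; simpa using hs
  | cons p pl ih =>
    intro K h hb s hs
    obtain ⟨x, a, b⟩ := p
    set pl2 : List (S × ℕ) := pl.map fun p => (p.1, p.2.1) with hpl2
    have hfst : pl2.map Prod.fst = pl.map fun p => p.1 := by
      simp [hpl2, List.map_map, Function.comp]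
    have hpow : (pl2.map fun p => p.1 ^ p.2) = pl.map fun p => p.1 ^ p.2.1 := by
      simp [hpl2, List.map_map, Function.comp]
    have hwr : WR K (x :: pl2.map Prod.fst) := by rw [hfst]; exact h
    rw [List.map_cons, List.map_cons, List.prod_cons, ofList_cons, ← sup_assoc] at hs
    have he : s * (x ^ b * (pl.map fun p => p.1 ^ p.2.2).prod) =
        (s * (pl.map fun p => p.1 ^ p.2.2).prod) * x ^ b := by ring
    rw [he] at hs
    rw [← hpow] at hs
    have h2 := core_iter pl2 K x hwr b a (hb _ List.mem_cons_self) _ hs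
    rw [hpow, sup_assoc] at h2
    have hWR2 : WR (K ⊔ Ideal.span {x ^ (a - b)}) (pl.map fun p => p.1) :=
      WR_pow_head h.1 h.2 (a - b)
    rw [← sup_assoc] at h2
    have h3 := ih (K ⊔ Ideal.span {x ^ (a - b)}) hWR2
      (fun p hp => hb p (List.mem_cons_of_mem _ hp)) s h2
    rw [List.map_cons, ofList_cons, ← sup_assoc]
    exact h3

lemma list_prod_pow (l : List S) (n : ℕ) : l.prod ^ n = (l.map (· ^ n)).prod := by
  induction l with
  | nil => simp
  | cons x l ih => simp [List.prod_cons, mul_pow, ih]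

lemma mul_span_mem {T : Set S} {J : Ideal S} (c : S) (hT : ∀ g ∈ T, g * c ∈ J) :
    ∀ j ∈ Ideal.span T, j * c ∈ J := by
  intro j hj
  induction hj using Submodule.span_induction with
  | mem g hg => exact hT g hg
  | zero => simpa using J.zero_mem
  | add a b _ _ ha hb => rw [add_mul]; exact add_mem ha hb
  | smul a x _ hx =>
    rw [smul_eq_mul, mul_assoc]
    exact Ideal.mul_mem_left _ _ hx

/-- The main induction. -/
lemma main_ind : ∀ (l : List S) (K : Ideal S) (q : ℕ), 2 ≤ q → ∀ s : S,
    WR K l → (∀ x ∈ l, s * x ∈ K ⊔ Ideal.ofList (l.map (· ^ q))) →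
    s ∈ (K ⊔ Ideal.ofList (l.map (· ^ q))) ⊔ Ideal.span {l.prod ^ (q - 1)} := by
  intro l
  induction l with
  | nil =>
    intro K q hq s _ _
    refine Submodule.mem_sup_right ?_
    simp only [List.prod_nil, one_pow]
    exact Ideal.mem_span_singleton.mpr ⟨s, (one_mul s).symm⟩
  | cons x ys ih =>
    intro K q hq s hWR hcol
    have hWRq : WR (K ⊔ Ideal.span {x ^ q}) ys := WR_pow_head hWR.1 hWR.2 q
    have hcol' : ∀ y ∈ ys, s * y ∈ (K ⊔ Ideal.span {x ^ q}) ⊔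
        Ideal.ofList (ys.map (· ^ q)) := by
      intro y hy
      have := hcol y (List.mem_cons_of_mem _ hy)
      rwa [List.map_cons, ofList_cons, ← sup_assoc] at this
    have hIH := ih (K ⊔ Ideal.span {x ^ q}) q hq s hWRq hcol'
    obtain ⟨m, hm, w, hsw⟩ := mem_sup_span.mp hIH
    have hm' : m ∈ K ⊔ Ideal.ofList ((x :: ys).map (· ^ q)) := by
      rwa [List.map_cons, ofList_cons, ← sup_assoc]
    set G := ys.prod with hG
    have hwx : w * G ^ (q - 1) * x ∈ K ⊔ Ideal.ofList ((x :: ys).map (· ^ q)) := by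
      have hx := hcol x List.mem_cons_self
      have : w * G ^ (q - 1) * x = s * x - m * x := by rw [hsw]; ring
      rw [this]
      exact sub_mem hx (Ideal.mul_mem_right _ _ hm')
    -- apply core_mono with pl = (x,q,1) :: ys.map (y,q,q-1)
    set pl : List (S × ℕ × ℕ) := (x, q, 1) :: ys.map fun y => (y, q, q - 1) with hpl
    have hfst : pl.map (fun p => p.1) = x :: ys := by
      simp [hpl, List.map_map, Function.comp_def]
    have hlt : ∀ p ∈ pl, p.2.2 < p.2.1 := by
      intro p hp
      rcases List.mem_cons.mp hp with rfl | hp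
      · exact hq
      · obtain ⟨y, _, rfl⟩ := List.mem_map.mp hp
        exact Nat.sub_lt (by omega) one_pos
    have hmonow : w * (pl.map fun p => p.1 ^ p.2.2).prod ∈
        K ⊔ Ideal.ofList (pl.map fun p => p.1 ^ p.2.1) := by
      have e1 : (pl.map fun p => p.1 ^ p.2.2).prod = x * G ^ (q - 1) := by
        simp only [hpl, List.map_cons, List.prod_cons, List.map_map, Function.comp, pow_one]
        rw [hG, list_prod_pow]
        rfl
      have e2 : (pl.map fun p => p.1 ^ p.2.1) = (x :: ys).map (· ^ q) := by
        simp [hpl, List.map_map, Function.comp]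
      rw [e1, e2]
      have : w * (x * G ^ (q - 1)) = w * G ^ (q - 1) * x := by ring
      rw [this]; exact hwx
    have hw := core_mono pl K (by rw [hfst]; exact hWR) hlt w hmonow
    have e3 : (pl.map fun p => p.1 ^ (p.2.1 - p.2.2)) =
        x ^ (q - 1) :: ys.map (· ^ 1) := by
      have : q - (q - 1) = 1 := by omega
      simp [hpl, List.map_map, Function.comp_def, this]
    rw [e3, ofList_cons, ← sup_assoc, sup_rswap] at hw
    simp only [pow_one, List.map_id'] at hw
    obtain ⟨m', hm'', t, hwt⟩ := mem_sup_span.mp hw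
    -- now assemble
    have fact1 : t * x ^ (q - 1) * G ^ (q - 1) ∈ Ideal.span {(x :: ys).prod ^ (q - 1)} := by
      rw [List.prod_cons, mul_pow]
      exact Ideal.mem_span_singleton'.mpr ⟨t, by ring⟩
    have fact2 : m' * G ^ (q - 1) ∈ K ⊔ Ideal.ofList ((x :: ys).map (· ^ q)) := by
      rcases Submodule.mem_sup.mp hm'' with ⟨k, hk, j, hj, rfl⟩
      rw [add_mul]
      refine add_mem (Submodule.mem_sup_left (Ideal.mul_mem_right _ _ hk))
        (Submodule.mem_sup_right ?_)
      refine mul_span_mem (G ^ (q - 1)) ?_ j hj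
      intro y hy
      have hdvd : y ^ q ∣ y * G ^ (q - 1) := by
        have h1 : y ^ (q - 1) ∣ G ^ (q - 1) := by
          rw [hG, list_prod_pow]
          exact List.dvd_prod (List.mem_map.mpr ⟨y, hy, rfl⟩)
        have h2 : y ^ q = y * y ^ (q - 1) := by
          rw [← pow_succ']
          congr 1
          omega
        rw [h2]
        exact mul_dvd_mul_left y h1
      have hyG : y * G ^ (q - 1) ∈ Ideal.span {y ^ q} := Ideal.mem_span_singleton.mpr hdvd
      have hle : Ideal.span {y ^ q} ≤ Ideal.ofList ((x :: ys).map (· ^ q)) :=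
        Ideal.span_le.mpr (Set.singleton_subset_iff.mpr
          (Ideal.subset_span (List.mem_map.mpr ⟨y, List.mem_cons_of_mem _ hy, rfl⟩)))
      exact hle hyG
    have : s = m + (m' * G ^ (q - 1) + t * x ^ (q - 1) * G ^ (q - 1)) := by
      rw [hsw, hwt]; ring
    rw [this]
    exact add_mem (Submodule.mem_sup_left hm')
      (add_mem (Submodule.mem_sup_left fact2) (Submodule.mem_sup_right fact1))

theorem smul_top_self (J : Ideal S) : (J • ⊤ : Submodule S S) = J := by
  rw [smul_eq_mul, Ideal.mul_top]

theorem sreg_colon (J : Ideal S) (x : S) (h : IsSMulRegular (S ⧸ (J • ⊤ : Submodule S S)) x)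
    (s : S) (hs : s * x ∈ J) : s ∈ J := by
  have h2 : x • Submodule.Quotient.mk s = x • (0 : S ⧸ (J • ⊤ : Submodule S S)) := by
    rw [smul_zero, ← Submodule.Quotient.mk_smul, Submodule.Quotient.mk_eq_zero, smul_top_self,
      smul_eq_mul, mul_comm]
    exact hs
  have := h h2
  rwa [Submodule.Quotient.mk_eq_zero, smul_top_self] at this

lemma WR_of_idx : ∀ (l : List S) (K : Ideal S),
    (∀ (i : ℕ) (hi : i < l.length) (s : S),
      s * l[i] ∈ K ⊔ Ideal.ofList (l.take i) → s ∈ K ⊔ Ideal.ofList (l.take i)) → WR K l := by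
  intro l
  induction l with
  | nil => intro K _; trivial
  | cons x ys ih =>
    intro K h
    constructor
    · intro s hs
      have := h 0 (by simp) s (by simpa using hs)
      simpa using this
    · refine ih (K ⊔ Ideal.span {x}) ?_
      intro i hi s hs
      have h2 := h (i + 1) (by simpa using hi) s (by
        show s * ys[i] ∈ _
        rw [List.take_succ_cons, ofList_cons, ← sup_assoc]
        exact hs)
      rw [List.take_succ_cons, ofList_cons, ← sup_assoc] at h2
      exact h2

lemma WR_of_isWeaklyRegular {l : List S} (h : RingTheory.Sequence.IsWeaklyRegular S l) :
    WR (⊥ : Ideal S) l := by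
  refine WR_of_idx l ⊥ ?_
  intro i hi s hs
  rw [bot_sup_eq] at hs ⊢
  exact sreg_colon _ _ (h.regular_mod_prev i hi) s hs

lemma ofList_ofFn {r : ℕ} (g : Fin r → S) :
    Ideal.ofList (List.ofFn g) = Ideal.span (Set.range g) := by
  unfold Ideal.ofList
  congr 1
  ext a
  simp [List.mem_ofFn]

lemma mem_colon_of_gen {T : Set S} {J : Ideal S} {c : S} (h : ∀ g ∈ T, c * g ∈ J) :
    c ∈ J.colon (Ideal.span T) := by
  rw [Submodule.mem_colon]
  intro p hp
  induction hp using Submodule.span_induction with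
  | mem g hg => exact h g hg
  | zero => simpa using J.zero_mem
  | add a b _ _ ha hb => rw [smul_add]; exact add_mem ha hb
  | smul a y _ hy => rw [smul_comm]; exact J.smul_mem a hy


end CFP

theorem colon_frobenius_power (S : Type*) [CommRing S] [IsNoetherianRing S]
    (p : ℕ) (hp : p.Prime) [CharP S p] (r : ℕ) (f : Fin r → S)
    (hreg : RingTheory.Sequence.IsRegular S (List.ofFn f)) (e : ℕ) :
    (Ideal.span (Set.range fun i => f i ^ p ^ e)).colon (Ideal.span (Set.range f)) =
      Ideal.span (Set.range fun i => f i ^ p ^ e) ⊔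
        Ideal.span {(∏ i, f i) ^ (p ^ e - 1)} := by
  set q := p ^ e with hqdef
  have hq1 : 1 ≤ q := Nat.one_le_pow _ _ hp.pos
  have hofnq : Ideal.ofList ((List.ofFn f).map (· ^ q)) =
      Ideal.span (Set.range fun i => f i ^ q) := by
    rw [List.map_ofFn]
    exact CFP.ofList_ofFn _
  refine le_antisymm ?_ ?_
  · intro s hs
    rcases lt_or_ge q 2 with h2 | h2
    · -- q = 1
      have hq : q - 1 = 0 := by omega
      rw [hq, pow_zero]
      exact Submodule.mem_sup_right (Ideal.mem_span_singleton.mpr (one_dvd s))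
    · have hWR : CFP.WR (⊥ : Ideal S) (List.ofFn f) :=
        CFP.WR_of_isWeaklyRegular hreg.toIsWeaklyRegular
      have hcol : ∀ x ∈ List.ofFn f, s * x ∈ (⊥ : Ideal S) ⊔
          Ideal.ofList ((List.ofFn f).map (· ^ q)) := by
        intro x hx
        obtain ⟨i, rfl⟩ := List.mem_ofFn.mp hx
        have := Submodule.mem_colon.mp hs (f i) (Ideal.subset_span ⟨i, rfl⟩)
        rw [smul_eq_mul] at this
        rw [bot_sup_eq, hofnq]
        exact this
      have := CFP.main_ind (List.ofFn f) ⊥ q h2 s hWR hcol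
      rwa [bot_sup_eq, hofnq, List.prod_ofFn] at this
  · refine sup_le ?_ ?_
    · rw [Ideal.span_le]
      rintro _ ⟨i, rfl⟩
      refine CFP.mem_colon_of_gen ?_
      rintro _ ⟨j, rfl⟩
      exact Ideal.mul_mem_right _ _ (Ideal.subset_span ⟨i, rfl⟩)
    · rw [Ideal.span_le, Set.singleton_subset_iff]
      refine CFP.mem_colon_of_gen ?_
      rintro _ ⟨j, rfl⟩
      have hdvd : f j ^ q ∣ (∏ i, f i) ^ (q - 1) * f j := by
        have h1 : f j ^ (q - 1) ∣ ∏ i, f i ^ (q - 1) :=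
          Finset.dvd_prod_of_mem _ (Finset.mem_univ j)
        have h2 : f j ^ q = f j ^ (q - 1) * f j := by
          conv_lhs => rw [show q = (q - 1) + 1 by omega]
          rw [pow_succ]
        rw [h2, ← Finset.prod_pow]
        exact mul_dvd_mul_right h1 (f j)
      have : (∏ i, f i) ^ (q - 1) * f j ∈ Ideal.span {f j ^ q} :=
        Ideal.mem_span_singleton.mpr hdvd
      have hle : Ideal.span {f j ^ q} ≤ Ideal.span (Set.range fun i => f i ^ q) := by
        rw [Ideal.span_le, Set.singleton_subset_iff]
        exact Ideal.subset_span ⟨j, rfl⟩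
      exact hle this
end

section
/- Let d ≥ 2, l ≥ 1, m = dl, and e > 0 a real number. Suppose δ_0, δ_1, …, δ_m are real numbers satisfying ∑_{i=0}^m δ_i = 0, ∑_{i=0}^m i·δ_i = 0, δ_0 ≤ d(d−1)/2 − e, δ_i ≤ −e for 1 ≤ i ≤ l−1, and δ_i ≥ 0 for i ≥ l+1. Then ∑_{i=0}^m i·δ_i ≥ (1/2)(e·l² + (e − d² + d)·l); in particular, if l is large enough that e·l² + (e − d² + d)·l > 0, such a sequence (δ_i) cannot exist. -/
theorem delta_estimate (d l m : ℕ) (hd : 2 ≤ d) (hl : 1 ≤ l) (hm : m = d * l)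
    (e : ℝ) (he : 0 < e) (δ : ℕ → ℝ)
    (hsum : ∑ i ∈ Finset.range (m + 1), δ i = 0)
    (hwsum : ∑ i ∈ Finset.range (m + 1), (i : ℝ) * δ i = 0)
    (h0 : δ 0 ≤ (d : ℝ) * (d - 1) / 2 - e)
    (hneg : ∀ i, 1 ≤ i → i ≤ l - 1 → δ i ≤ -e)
    (hpos : ∀ i, l + 1 ≤ i → i ≤ m → 0 ≤ δ i) :
    (∑ i ∈ Finset.range (m + 1), (i : ℝ) * δ i ≥
      (1 / 2) * (e * (l : ℝ) ^ 2 + (e - (d : ℝ) ^ 2 + d) * l)) ∧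
    (e * (l : ℝ) ^ 2 + (e - (d : ℝ) ^ 2 + d) * l > 0 → False) := by
  have hlm : l ≤ m := by
    subst hm
    calc l = 1 * l := (one_mul l).symm
    _ ≤ d * l := Nat.mul_le_mul_right l (by omega)
  have hl' : (1 : ℝ) ≤ (l : ℝ) := by exact_mod_cast hl
  have key : ∑ i ∈ Finset.range (m + 1), ((i : ℝ) - l) * δ i = 0 := by
    have h : ∑ i ∈ Finset.range (m + 1), ((i : ℝ) - l) * δ i
        = ∑ i ∈ Finset.range (m + 1), ((i : ℝ) * δ i)
          - (l : ℝ) * ∑ i ∈ Finset.range (m + 1), δ i := by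
      rw [Finset.mul_sum, ← Finset.sum_sub_distrib]
      apply Finset.sum_congr rfl
      intro i _
      ring
    rw [h, hsum, hwsum]; ring
  set f : ℕ → ℝ := fun i => ((i : ℝ) - l) * δ i with hf
  have split1 : ∑ i ∈ Finset.range (m + 1), f i
      = ∑ i ∈ Finset.range (l + 1), f i + ∑ i ∈ Finset.Ico (l + 1) (m + 1), f i := by
    rw [Finset.range_eq_Ico, Finset.range_eq_Ico]
    exact (Finset.sum_Ico_consecutive f (n := l + 1) (k := m + 1) (Nat.zero_le _) (by omega)).symm
  have h2 : 0 ≤ ∑ i ∈ Finset.Ico (l + 1) (m + 1), f i := by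
    apply Finset.sum_nonneg
    intro i hi
    rw [Finset.mem_Ico] at hi
    have h1 : (l : ℝ) ≤ (i : ℝ) := by exact_mod_cast Nat.le_of_succ_le hi.1
    exact mul_nonneg (by linarith) (hpos i hi.1 (by omega))
  have h3 : ∑ i ∈ Finset.range (l + 1), f i
      = f 0 + ∑ i ∈ Finset.Ico 1 l, f i + f l := by
    rw [Finset.sum_range_succ, Finset.range_eq_Ico,
      Finset.sum_eq_sum_Ico_succ_bot (by omega : (0:ℕ) < l)]
  have hfl : f l = 0 := by simp [hf]
  have hf0 : f 0 ≥ -(l : ℝ) * ((d : ℝ) * (d - 1) / 2 - e) := by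
    have : f 0 = -(l : ℝ) * δ 0 := by simp [hf]
    rw [this]
    nlinarith [h0]
  have h4 : ∑ i ∈ Finset.Ico 1 l, ((l : ℝ) - i) * e ≤ ∑ i ∈ Finset.Ico 1 l, f i := by
    apply Finset.sum_le_sum
    intro i hi
    rw [Finset.mem_Ico] at hi
    have hi1 : δ i ≤ -e := hneg i hi.1 (by omega)
    have hi2 : (i : ℝ) ≤ (l : ℝ) := by exact_mod_cast Nat.le_of_lt hi.2
    simp only [hf]
    nlinarith [hi1, hi2]
  have gauss : ∀ n : ℕ, ∑ i ∈ Finset.range n, (i : ℝ) = n * (n - 1) / 2 := by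
    intro n
    induction n with
    | zero => simp
    | succ k ih => rw [Finset.sum_range_succ, ih]; push_cast; ring
  have h5 : ∑ i ∈ Finset.Ico 1 l, ((l : ℝ) - i) * e = e * ((l : ℝ) * (l - 1) / 2) := by
    have hsplit : ∑ i ∈ Finset.range l, ((l : ℝ) - i) * e
        = ((l : ℝ) - 0) * e + ∑ i ∈ Finset.Ico 1 l, ((l : ℝ) - i) * e := by
      rw [Finset.range_eq_Ico, Finset.sum_eq_sum_Ico_succ_bot (by omega : (0:ℕ) < l)]
      norm_num
    have hrange : ∑ i ∈ Finset.range l, ((l : ℝ) - i) * e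
        = (l : ℝ) * l * e - (∑ i ∈ Finset.range l, (i : ℝ)) * e := by
      calc ∑ i ∈ Finset.range l, ((l : ℝ) - i) * e
          = ∑ i ∈ Finset.range l, ((l : ℝ) * e - (i : ℝ) * e) := by
            apply Finset.sum_congr rfl; intros; ring
        _ = (l : ℕ) • ((l : ℝ) * e) - (∑ i ∈ Finset.range l, (i : ℝ)) * e := by
            rw [Finset.sum_sub_distrib, Finset.sum_const, Finset.card_range, Finset.sum_mul]
        _ = (l : ℝ) * l * e - (∑ i ∈ Finset.range l, (i : ℝ)) * e := by
            rw [nsmul_eq_mul]; ring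
    rw [gauss l] at hrange
    have := hsplit.symm.trans hrange
    linarith
  constructor
  · rw [hwsum]
    have htot : f 0 + ∑ i ∈ Finset.Ico 1 l, f i + f l
        + ∑ i ∈ Finset.Ico (l + 1) (m + 1), f i = 0 := by
      rw [← h3, ← split1, key]
    rw [hfl] at htot
    nlinarith [hf0, h4, h5, htot, h2]
  · intro h
    have htot : f 0 + ∑ i ∈ Finset.Ico 1 l, f i + f l
        + ∑ i ∈ Finset.Ico (l + 1) (m + 1), f i = 0 := by
      rw [← h3, ← split1, key]
    rw [hfl] at htot
    nlinarith [hf0, h4, h5, htot, h2]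
end
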